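/- (Theorem: exactness of SimDex index) Let I be a finite set of items, u a user with true scaled rating r(i) = (u·i)/‖u‖, and L an enumeration of I sorted descending by bounds b(i) satisfying b(i) ≥ r(i) for all i. The top-K algorithm that maintains a min-heap of the K best true ratings seen so far and terminates at the first unvisited position whose bound is strictly below the heap minimum returns exactly a set I' ⊆ I of size K such that for all i ∈ I \ I' and all j ∈ I', r(i) ≤ r(j). -/

import Mathlib

open scoped RealInnerProductSpace

/-- Exactness of the SimDex index (Theorem 1): the heap-based traversal over a list
sorted descending by valid per-item upper bounds, terminating when the heap minimum
strictly exceeds the next bound, returns an exact top-K set. -/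
theorem simdex_index_exact_topK {f : ℕ} (u : EuclideanSpace ℝ (Fin f)) (hu : u ≠ 0)
    (L : List (EuclideanSpace ℝ (Fin f))) (hnodup : L.Nodup)
    (b : EuclideanSpace ℝ (Fin f) → ℝ)
    (hb : ∀ i ∈ L, ⟪u, i⟫ / ‖u‖ ≤ b i)
    (hsorted : (L.map b).Pairwise (· ≥ ·))
    (K m : ℕ) (hKm : K ≤ m) (hmL : m ≤ L.length)
    (I' : Finset (EuclideanSpace ℝ (Fin f)))
    (hcard : I'.card = K)
    (hsub : ∀ j ∈ I', j ∈ L.take m)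
    (hheap : ∀ i ∈ L.take m, i ∉ I' → ∀ j ∈ I', ⟪u, i⟫ / ‖u‖ ≤ ⟪u, j⟫ / ‖u‖)
    (hstop : ∀ (h : m < L.length), ∀ j ∈ I', b (L.get ⟨m, h⟩) < ⟪u, j⟫ / ‖u‖) :
    ∀ i ∈ L, i ∉ I' → ∀ j ∈ I', ⟪u, i⟫ / ‖u‖ ≤ ⟪u, j⟫ / ‖u‖ := by
  intro i hi hni j hj
  by_cases htake : i ∈ L.take m
  · exact hheap i htake hni j hj
  · -- i appears at an index ≥ m
    obtain ⟨⟨n, hn⟩, rfl⟩ := List.mem_iff_get.mp hi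
    have hmn : m ≤ n := by
      by_contra hlt
      push_neg at hlt
      exact htake (List.mem_take_iff_getElem.mpr ⟨n, by omega, by simp⟩)
    have hmlen : m < L.length := lt_of_le_of_lt hmn hn
    have hble : b (L.get ⟨n, hn⟩) ≤ b (L.get ⟨m, hmlen⟩) := by
      rcases eq_or_lt_of_le hmn with h | h
      · subst h; rfl
      · have := List.pairwise_iff_get.mp hsorted
          ⟨m, by simpa using hmlen⟩ ⟨n, by simpa using hn⟩ h
        simpa using this
    calc ⟪u, L.get ⟨n, hn⟩⟫ / ‖u‖ ≤ b (L.get ⟨n, hn⟩) := hb _ hi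
      _ ≤ b (L.get ⟨m, hmlen⟩) := hble
      _ ≤ ⟪u, j⟫ / ‖u‖ := (hstop hmlen j hj).le
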